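/- For each N ≥ 2 and z ∈ (0,1), the quantity N(N-1)z²(1-z)^{N-2}·₃F₂([1,1,2-N],[2,2]; -z/(1-z)) equals 1 + 1/(Nz) + o(1/N) as N → ∞ (with z fixed). -/

import Mathlib

open Finset Filter

/-- Pochhammer symbol `(a)ₖ = a(a+1)⋯(a+k-1)`. -/
def poch (a : ℝ) (k : ℕ) : ℝ := ∏ j ∈ Finset.range k, (a + j)

/-- Terminating generalized hypergeometric series
`₃F₂([1,1,a₃],[2,2]; x) = ∑_{k<terms} (1)ₖ(1)ₖ(a₃)ₖ/((2)ₖ(2)ₖ k!) xᵏ`. -/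
noncomputable def F32 (a3 : ℝ) (terms : ℕ) (x : ℝ) : ℝ :=
  ∑ k ∈ Finset.range terms,
    (poch 1 k * poch 1 k * poch a3 k) / (poch 2 k * poch 2 k * (k.factorial : ℝ)) * x ^ k

lemma poch_one (k : ℕ) : poch 1 k = k.factorial := by
  induction k with
  | zero => simp [poch]
  | succ n ih => rw [poch, Finset.prod_range_succ, ← poch, ih]; push_cast [Nat.factorial_succ]; ring

lemma poch_two (k : ℕ) : poch 2 k = (k+1).factorial := by
  induction k with
  | zero => simp [poch]
  | succ n ih => rw [poch, Finset.prod_range_succ, ← poch, ih]; push_cast [Nat.factorial_succ]; ring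

lemma poch_neg (m k : ℕ) : poch (-(m:ℝ)) k = (-1)^k * (m.descFactorial k : ℝ) := by
  induction k with
  | zero => simp [poch]
  | succ n ih =>
    rw [poch, Finset.prod_range_succ, ← poch, ih, Nat.descFactorial_succ]
    rcases le_or_gt (n+1) m with h | h
    · have : ((m - n : ℕ) : ℝ) = (m:ℝ) - n := by
        have : n ≤ m := by omega
        push_cast [this]; ring
      push_cast [this]; ring
    · rcases eq_or_lt_of_le (by omega : m ≤ n) with h' | h'
      · subst h'; simp
      · have h0 : m.descFactorial n = 0 := Nat.descFactorial_eq_zero_iff_lt.mpr h'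
        simp [h0]

lemma termA (z : ℝ) (hz : (1:ℝ) - z ≠ 0) (m k : ℕ) (hk : k ≤ m) :
    ((m:ℝ)+2) * (((m:ℝ)+2) - 1) * z^2 * (1-z)^m *
      ((poch 1 k * poch 1 k * poch (2 - (((m+2:ℕ)):ℝ)) k) /
        (poch 2 k * poch 2 k * (k.factorial:ℝ)) * (-z/(1-z))^k)
    = (1 + 1/((k:ℝ)+1)) * (((m+2).choose (k+2)) : ℝ) * z^(k+2) * (1-z)^(m-k) := by
  have h2 : 2 - (((m+2:ℕ)):ℝ) = -(m:ℝ) := by push_cast; ring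
  rw [h2, poch_one, poch_two, poch_neg]
  have hn : (m+2) * ((m+1) * m.descFactorial k) = (k+2).factorial * (m+2).choose (k+2) := by
    rw [← Nat.succ_descFactorial_succ, ← Nat.succ_descFactorial_succ,
      Nat.descFactorial_eq_factorial_mul_choose]
  have hpow : (1-z)^m = (1-z)^(m-k) * (1-z)^k := by
    rw [← pow_add]; congr 1; omega
  have hx : (-z/(1-z))^k = (-1)^k * z^k / (1-z)^k := by
    rw [div_pow, neg_pow]
  have hfk : (k.factorial : ℝ) ≠ 0 := Nat.cast_ne_zero.mpr k.factorial_ne_zero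
  have hfk1 : ((k+1).factorial : ℝ) ≠ 0 := Nat.cast_ne_zero.mpr (k+1).factorial_ne_zero
  have hk1 : ((k:ℝ)+1) ≠ 0 := by positivity
  have hzk : (1-z)^k ≠ 0 := pow_ne_zero _ hz
  have hQ : ((m.descFactorial k : ℝ)) * (((m:ℝ)+2) * (((m:ℝ)+1))) =
      ((k+2).factorial : ℝ) * ((m+2).choose (k+2) : ℝ) := by
    have := congrArg (fun n : ℕ => (n : ℝ)) hn
    push_cast at this
    linarith [this]
  have hf2 : ((k+2).factorial : ℝ) = ((k:ℝ)+2) * (((k:ℝ)+1) * k.factorial) := by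
    rw [Nat.factorial_succ, Nat.factorial_succ]; push_cast; ring
  have hf1 : ((k+1).factorial : ℝ) = ((k:ℝ)+1) * k.factorial := by
    rw [Nat.factorial_succ]; push_cast; ring
  rw [hx, hpow, hf1]
  have hneg : ((-1:ℝ))^k * (-1:ℝ)^k = 1 := by
    rw [← mul_pow]; norm_num
  field_simp
  linear_combination
    (((m:ℝ)+2)*((m:ℝ)+1)*(m.descFactorial k : ℝ) * z^(k+2)) * hneg
    + (z^(k+2)) * hQ
    + ((((m+2).choose (k+2):ℝ)) * z^(k+2)) * hf2

lemma binom2 (z : ℝ) (m : ℕ) :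
    ∑ k ∈ range (m+1), (((m+2).choose (k+2):ℕ):ℝ) * z^(k+2) * (1-z)^(m-k)
      = 1 - (1-z)^(m+2) - ((m:ℝ)+2)*z*(1-z)^(m+1) := by
  have h : (1:ℝ) = ∑ j ∈ range (m+3), z^j * (1-z)^(m+2-j) * (((m+2).choose j : ℕ):ℝ) := by
    have h0 := add_pow z (1-z) (m+2)
    rw [show z + (1-z) = 1 by ring, one_pow] at h0
    exact h0
  rw [Finset.sum_range_succ', Finset.sum_range_succ'] at h
  simp only [pow_zero, Nat.sub_zero, Nat.choose_zero_right, Nat.cast_one, mul_one, one_mul,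
    pow_one, Nat.choose_one_right, Nat.add_sub_add_right] at h
  have hc : ∀ k ∈ range (m+1), z^(k+2) * (1-z)^(m-k) * (((m+2).choose (k+2) : ℕ):ℝ)
      = (((m+2).choose (k+2):ℕ):ℝ) * z^(k+2) * (1-z)^(m-k) := by
    intro k _; ring
  rw [Finset.sum_congr rfl hc] at h
  have h1 : ((m+2)-1 : ℕ) = m+1 := by omega
  rw [h1] at h
  norm_num at h
  linarith [h]

lemma binom3 (z : ℝ) (m : ℕ) :
    ∑ k ∈ range (m+1), (((m+3).choose (k+3):ℕ):ℝ) * z^(k+3) * (1-z)^(m-k)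
      = 1 - (1-z)^(m+3) - ((m:ℝ)+3)*z*(1-z)^(m+2)
        - (((m:ℝ)+3)*((m:ℝ)+2)/2)*z^2*(1-z)^(m+1) := by
  have h : (1:ℝ) = ∑ j ∈ range (m+4), z^j * (1-z)^(m+3-j) * (((m+3).choose j : ℕ):ℝ) := by
    have h0 := add_pow z (1-z) (m+3)
    rw [show z + (1-z) = 1 by ring, one_pow] at h0
    exact h0
  rw [Finset.sum_range_succ', Finset.sum_range_succ', Finset.sum_range_succ'] at h
  simp only [pow_zero, Nat.sub_zero, Nat.choose_zero_right, Nat.cast_one, mul_one, one_mul,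
    pow_one, Nat.choose_one_right, Nat.add_sub_add_right] at h
  have hc : ∀ k ∈ range (m+1), z^(k+3) * (1-z)^(m-k) * (((m+3).choose (k+3) : ℕ):ℝ)
      = (((m+3).choose (k+3):ℕ):ℝ) * z^(k+3) * (1-z)^(m-k) := by
    intro k _; ring
  rw [Finset.sum_congr rfl hc] at h
  have h1 : ((m+3)-1 : ℕ) = m+2 := by omega
  have h2 : ((m+3)-2 : ℕ) = m+1 := by omega
  rw [h1, h2, Nat.cast_choose_two] at h
  norm_num at h
  linarith [h]

lemma binom4 (z : ℝ) (hz0 : 0 ≤ z) (hz1 : z ≤ 1) (m : ℕ) :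
    ∑ k ∈ range (m+1), (((m+4).choose (k+4):ℕ):ℝ) * z^(k+4) * (1-z)^(m-k) ≤ 1 := by
  have h : (1:ℝ) = ∑ j ∈ range (m+5), z^j * (1-z)^(m+4-j) * (((m+4).choose j : ℕ):ℝ) := by
    have h0 := add_pow z (1-z) (m+4)
    rw [show z + (1-z) = 1 by ring, one_pow] at h0
    exact h0
  rw [Finset.sum_range_succ', Finset.sum_range_succ', Finset.sum_range_succ',
    Finset.sum_range_succ'] at h
  have hc : ∀ k ∈ range (m+1), z^(k+4) * (1-z)^(m+4-(k+4)) * (((m+4).choose (k+4) : ℕ):ℝ)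
      = (((m+4).choose (k+4):ℕ):ℝ) * z^(k+4) * (1-z)^(m-k) := by
    intro k _
    rw [Nat.add_sub_add_right]; ring
  rw [Finset.sum_congr rfl hc] at h
  have hz' : (0:ℝ) ≤ 1 - z := by linarith
  have t0 : (0:ℝ) ≤ z^(0+1) * (1-z)^(m+4-(0+1)) * (((m+4).choose (0+1) : ℕ):ℝ) := by positivity
  have t1 : (0:ℝ) ≤ z^(0+1+1) * (1-z)^(m+4-(0+1+1)) * (((m+4).choose (0+1+1) : ℕ):ℝ) := by
    positivity
  have t2 : (0:ℝ) ≤ z^(0+1+1+1) * (1-z)^(m+4-(0+1+1+1)) * (((m+4).choose (0+1+1+1) : ℕ):ℝ) := by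
    positivity
  have t3 : (0:ℝ) ≤ z^0 * (1-z)^(m+4-0) * (((m+4).choose 0 : ℕ):ℝ) := by positivity
  linarith [h, t0, t1, t2, t3]

lemma hch1 (m k : ℕ) : ((m:ℝ)+3) * (((m+2).choose (k+2):ℕ):ℝ)
    = ((k:ℝ)+3) * (((m+3).choose (k+3):ℕ):ℝ) := by
  have := Nat.add_one_mul_choose_eq (m+2) (k+2)
  have h := congrArg (fun n : ℕ => (n:ℝ)) this
  push_cast at h
  linarith [h]

lemma hch2 (m k : ℕ) : ((m:ℝ)+4) * (((m+3).choose (k+3):ℕ):ℝ)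
    = ((k:ℝ)+4) * (((m+4).choose (k+4):ℕ):ℝ) := by
  have := Nat.add_one_mul_choose_eq (m+3) (k+3)
  have h := congrArg (fun n : ℕ => (n:ℝ)) this
  push_cast at h
  linarith [h]

lemma Pval (z : ℝ) (hz0 : z ≠ 0) (m : ℕ) :
    ∑ k ∈ range (m+1), (((m+2).choose (k+2):ℕ):ℝ) * z^(k+2)*(1-z)^(m-k) * (1/((k:ℝ)+3))
    = (1/(((m:ℝ)+3)*z)) * (1 - (1-z)^(m+3) - ((m:ℝ)+3)*z*(1-z)^(m+2)
        - (((m:ℝ)+3)*((m:ℝ)+2)/2)*z^2*(1-z)^(m+1)) := by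
  rw [← binom3 z m, Finset.mul_sum]
  refine Finset.sum_congr rfl fun k _ => ?_
  have h := hch1 m k
  have hk3 : ((k:ℝ)+3) ≠ 0 := by positivity
  have hm3 : ((m:ℝ)+3) ≠ 0 := by positivity
  have hzz : z^(k+3) = z * z^(k+2) := by rw [pow_succ]; ring
  rw [hzz]
  field_simp
  linear_combination ((1-z)^(m-k)) * h

lemma Qbound (z : ℝ) (hz0 : 0 < z) (hz1 : z ≤ 1) (m : ℕ) :
    ∑ k ∈ range (m+1), (((m+2).choose (k+2):ℕ):ℝ) * z^(k+2)*(1-z)^(m-k)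
        * (2/(((k:ℝ)+1)*((k:ℝ)+3)))
    ≤ 8/(((m:ℝ)+3)*((m:ℝ)+4)*z^2) := by
  have hz' : (0:ℝ) ≤ 1 - z := by linarith
  have step : ∀ k ∈ range (m+1),
      (((m+2).choose (k+2):ℕ):ℝ) * z^(k+2)*(1-z)^(m-k) * (2/(((k:ℝ)+1)*((k:ℝ)+3)))
      ≤ (8/(((m:ℝ)+3)*((m:ℝ)+4)*z^2))
          * ((((m+4).choose (k+4):ℕ):ℝ) * z^(k+4) * (1-z)^(m-k)) := by
    intro k _
    have hC : (((m+4).choose (k+4):ℕ):ℝ) * (((k:ℝ)+3) * ((k:ℝ)+4))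
        = ((m:ℝ)+3)*((m:ℝ)+4) * (((m+2).choose (k+2):ℕ):ℝ) := by
      linear_combination (-((m:ℝ)+4)) * hch1 m k + (-((k:ℝ)+3)) * hch2 m k
    have hfrac : (2/(((k:ℝ)+1)*((k:ℝ)+3))) ≤ 8/(((k:ℝ)+3)*((k:ℝ)+4)) := by
      rw [div_le_div_iff₀ (by positivity) (by positivity)]
      nlinarith [sq_nonneg ((k:ℝ)+3)]
    have h1 : (((m+2).choose (k+2):ℕ):ℝ) * z^(k+2)*(1-z)^(m-k) * (2/(((k:ℝ)+1)*((k:ℝ)+3)))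
        ≤ (((m+2).choose (k+2):ℕ):ℝ) * z^(k+2)*(1-z)^(m-k) * (8/(((k:ℝ)+3)*((k:ℝ)+4))) := by
      have : (0:ℝ) ≤ (((m+2).choose (k+2):ℕ):ℝ) * z^(k+2)*(1-z)^(m-k) := by positivity
      exact mul_le_mul_of_nonneg_left hfrac this
    refine h1.trans (le_of_eq ?_)
    have hzz : z^(k+4) = z^2 * z^(k+2) := by rw [show k+4 = (k+2)+2 by ring, pow_add]; ring
    rw [hzz]
    have hk3 : ((k:ℝ)+3) ≠ 0 := by positivity
    have hk4 : ((k:ℝ)+4) ≠ 0 := by positivity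
    have hm3 : ((m:ℝ)+3) ≠ 0 := by positivity
    have hm4 : ((m:ℝ)+4) ≠ 0 := by positivity
    have hz2 : z^2 ≠ 0 := by positivity
    field_simp
    linear_combination (-(1-z)^(m-k)) * hC
  calc ∑ k ∈ range (m+1), (((m+2).choose (k+2):ℕ):ℝ) * z^(k+2)*(1-z)^(m-k)
        * (2/(((k:ℝ)+1)*((k:ℝ)+3)))
      ≤ ∑ k ∈ range (m+1), (8/(((m:ℝ)+3)*((m:ℝ)+4)*z^2))
          * ((((m+4).choose (k+4):ℕ):ℝ) * z^(k+4) * (1-z)^(m-k)) :=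
        Finset.sum_le_sum step
    _ = (8/(((m:ℝ)+3)*((m:ℝ)+4)*z^2))
          * ∑ k ∈ range (m+1), (((m+4).choose (k+4):ℕ):ℝ) * z^(k+4) * (1-z)^(m-k) := by
        rw [Finset.mul_sum]
    _ ≤ (8/(((m:ℝ)+3)*((m:ℝ)+4)*z^2)) * 1 := by
        apply mul_le_mul_of_nonneg_left (binom4 z (le_of_lt hz0) hz1 m)
        positivity
    _ = 8/(((m:ℝ)+3)*((m:ℝ)+4)*z^2) := by ring

lemma Qnonneg (z : ℝ) (hz0 : 0 ≤ z) (hz1 : z ≤ 1) (m : ℕ) :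
    0 ≤ ∑ k ∈ range (m+1), (((m+2).choose (k+2):ℕ):ℝ) * z^(k+2)*(1-z)^(m-k)
        * (2/(((k:ℝ)+1)*((k:ℝ)+3))) := by
  apply Finset.sum_nonneg
  intro k _
  have : (0:ℝ) ≤ 1 - z := by linarith
  positivity

lemma Edecomp (z : ℝ) (hz : (1:ℝ) - z ≠ 0) (m : ℕ) :
    (((m+2:ℕ)):ℝ) * ((((m+2:ℕ)):ℝ) - 1) * z^2 * (1-z)^(m+2-2)
        * F32 (2 - (((m+2:ℕ)):ℝ)) (m+2-1) (-z/(1-z))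
    = (1 - (1-z)^(m+2) - ((m:ℝ)+2)*z*(1-z)^(m+1))
      + (∑ k ∈ range (m+1), (((m+2).choose (k+2):ℕ):ℝ) * z^(k+2)*(1-z)^(m-k) * (1/((k:ℝ)+3)))
      + (∑ k ∈ range (m+1), (((m+2).choose (k+2):ℕ):ℝ) * z^(k+2)*(1-z)^(m-k)
          * (2/(((k:ℝ)+1)*((k:ℝ)+3)))) := by
  have hs1 : (m+2-2 : ℕ) = m := by omega
  have hs2 : (m+2-1 : ℕ) = m+1 := by omega
  rw [hs1, hs2, F32, Finset.mul_sum]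
  have hstep : ∀ k ∈ range (m+1),
      (((m+2:ℕ)):ℝ) * ((((m+2:ℕ)):ℝ) - 1) * z^2 * (1-z)^m *
        ((poch 1 k * poch 1 k * poch (2 - (((m+2:ℕ)):ℝ)) k) /
          (poch 2 k * poch 2 k * (k.factorial:ℝ)) * (-z/(1-z))^k)
      = (((m+2).choose (k+2):ℕ):ℝ) * z^(k+2)*(1-z)^(m-k)
        + (((m+2).choose (k+2):ℕ):ℝ) * z^(k+2)*(1-z)^(m-k) * (1/((k:ℝ)+3))
        + (((m+2).choose (k+2):ℕ):ℝ) * z^(k+2)*(1-z)^(m-k)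
            * (2/(((k:ℝ)+1)*((k:ℝ)+3))) := by
    intro k hk
    have hkm : k ≤ m := by simpa [Nat.lt_succ_iff] using hk
    have hcast : (((m+2:ℕ)):ℝ) = (m:ℝ)+2 := by push_cast; ring
    rw [hcast, show (2:ℝ) - ((m:ℝ)+2) = 2 - (((m+2:ℕ)):ℝ) by push_cast; ring,
      termA z hz m k hkm]
    have hk1 : ((k:ℝ)+1) ≠ 0 := by positivity
    have hk3 : ((k:ℝ)+3) ≠ 0 := by positivity
    field_simp
    ring
  rw [Finset.sum_congr rfl hstep, Finset.sum_add_distrib, Finset.sum_add_distrib, binom2]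

lemma Geq (z : ℝ) (hz0 : z ≠ 0) (m : ℕ) :
    ((m:ℝ)+2) * ((1 - (1-z)^(m+2) - ((m:ℝ)+2)*z*(1-z)^(m+1))
      + (1/(((m:ℝ)+3)*z)) * (1 - (1-z)^(m+3) - ((m:ℝ)+3)*z*(1-z)^(m+2)
          - (((m:ℝ)+3)*((m:ℝ)+2)/2)*z^2*(1-z)^(m+1))
      - 1 - 1/(((m:ℝ)+2)*z))
    = -(2*((m:ℝ)+2))*(1-z)^(m+2) - (3/2)*((m:ℝ)+2)^2*z*(1-z)^(m+1)
      - 1/(((m:ℝ)+3)*z) - (((m:ℝ)+2)/(((m:ℝ)+3)*z))*(1-z)^(m+3) := by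
  have hm2 : ((m:ℝ)+2) ≠ 0 := by positivity
  have hm3 : ((m:ℝ)+3) ≠ 0 := by positivity
  field_simp
  ring

lemma tend_poly_geom (r : ℝ) (hr0 : 0 < r) (hr1 : r < 1) (c : ℕ) :
    Tendsto (fun m : ℕ => ((m:ℝ)+2) * r^(m+c)) atTop (nhds 0) := by
  have habs : |r| < 1 := by rw [abs_of_pos hr0]; exact hr1
  have h1 := tendsto_pow_const_mul_const_pow_of_abs_lt_one 1 habs
  have h0 := tendsto_pow_atTop_nhds_zero_of_abs_lt_one habs
  have h : Tendsto (fun m : ℕ => r^c * ((m:ℝ)^1 * r^m) + 2*r^c * r^m) atTop (nhds 0) := by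
    have := (h1.const_mul (r^c)).add (h0.const_mul (2*r^c))
    simpa using this
  refine h.congr fun m => ?_
  rw [pow_add]; ring

lemma tend_poly2_geom (r : ℝ) (hr0 : 0 < r) (hr1 : r < 1) :
    Tendsto (fun m : ℕ => ((m:ℝ)+2)^2 * r^(m+1)) atTop (nhds 0) := by
  have habs : |r| < 1 := by rw [abs_of_pos hr0]; exact hr1
  have h2 := tendsto_pow_const_mul_const_pow_of_abs_lt_one 2 habs
  have h1 := tendsto_pow_const_mul_const_pow_of_abs_lt_one 1 habs
  have h0 := tendsto_pow_atTop_nhds_zero_of_abs_lt_one habs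
  have h : Tendsto (fun m : ℕ =>
      r * ((m:ℝ)^2 * r^m) + 4*r * ((m:ℝ)^1 * r^m) + 4*r * r^m) atTop (nhds 0) := by
    have := ((h2.const_mul r).add (h1.const_mul (4*r))).add (h0.const_mul (4*r))
    simpa using this
  refine h.congr fun m => ?_
  rw [pow_add]; ring

lemma tend_inv3 (z : ℝ) (hz : z ≠ 0) (c : ℝ) :
    Tendsto (fun m : ℕ => 1/(((m:ℝ)+c)*z)) atTop (nhds 0) := by
  have h : Tendsto (fun m : ℕ => (m:ℝ)+c) atTop atTop :=
    tendsto_atTop_add_const_right _ c tendsto_natCast_atTop_atTop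
  have h2 : Tendsto (fun m : ℕ => ((m:ℝ)+c)⁻¹) atTop (nhds 0) :=
    tendsto_inv_atTop_zero.comp h
  have h3 := h2.const_mul (1/z)
  simp only [mul_zero] at h3
  refine h3.congr' ?_
  filter_upwards [eventually_gt_atTop 0] with m _
  rw [one_div, one_div, mul_inv]
  ring

/-- For fixed `z ∈ (0,1)`,
`N(N-1)z²(1-z)^{N-2} ₃F₂([1,1,2-N],[2,2]; -z/(1-z)) = 1 + 1/(Nz) + o(1/N)`
as `N → ∞`, the series terminating after `N-1` terms (`k = 0,…,N-2`). -/
theorem hypergeometric_asymptotics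
    (z : ℝ) (hz : z ∈ Set.Ioo (0:ℝ) 1) :
    (fun N : ℕ =>
        (N : ℝ) * ((N : ℝ) - 1) * z ^ 2 * (1 - z) ^ (N - 2)
            * F32 (2 - (N : ℝ)) (N - 1) (-z / (1 - z))
          - (1 + 1 / ((N : ℝ) * z)))
      =o[atTop] (fun N : ℕ => 1 / (N : ℝ)) := by
  obtain ⟨hz0, hz1⟩ := hz
  have hzne : z ≠ 0 := ne_of_gt hz0
  have hr0 : 0 < 1 - z := by linarith
  have hr1 : 1 - z < 1 := by linarith
  have hrne : (1:ℝ) - z ≠ 0 := ne_of_gt hr0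
  set f : ℕ → ℝ := fun N : ℕ =>
      (N : ℝ) * ((N : ℝ) - 1) * z ^ 2 * (1 - z) ^ (N - 2)
          * F32 (2 - (N : ℝ)) (N - 1) (-z / (1 - z))
        - (1 + 1 / ((N : ℝ) * z)) with hf
  set Q : ℕ → ℝ := fun m => ∑ k ∈ range (m+1),
      (((m+2).choose (k+2):ℕ):ℝ) * z^(k+2)*(1-z)^(m-k) * (2/(((k:ℝ)+1)*((k:ℝ)+3))) with hQdef
  set G : ℕ → ℝ := fun m =>
      -(2*((m:ℝ)+2))*(1-z)^(m+2) - (3/2)*((m:ℝ)+2)^2*z*(1-z)^(m+1)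
      - 1/(((m:ℝ)+3)*z) - (((m:ℝ)+2)/(((m:ℝ)+3)*z))*(1-z)^(m+3) with hGdef
  have key : ∀ m : ℕ, ((m:ℝ)+2) * f (m+2) = G m + ((m:ℝ)+2) * Q m := by
    intro m
    have hE := Edecomp z hrne m
    have hP := Pval z hzne m
    have hcast : (((m+2:ℕ)):ℝ) = (m:ℝ)+2 := by push_cast; ring
    have hfval : f (m+2)
        = (1 - (1-z)^(m+2) - ((m:ℝ)+2)*z*(1-z)^(m+1))
          + (1/(((m:ℝ)+3)*z)) * (1 - (1-z)^(m+3) - ((m:ℝ)+3)*z*(1-z)^(m+2)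
              - (((m:ℝ)+3)*((m:ℝ)+2)/2)*z^2*(1-z)^(m+1))
          + Q m - (1 + 1/(((m:ℝ)+2)*z)) := by
      rw [hf]
      simp only
      rw [hE, hP, hQdef, hcast]
    rw [hfval, hGdef]
    simp only
    linear_combination Geq z hzne m
  have htendG : Tendsto G atTop (nhds 0) := by
    have t1 := tend_poly_geom (1-z) hr0 hr1 2
    have t2 := tend_poly2_geom (1-z) hr0 hr1
    have t3 := tend_inv3 z hzne 3
    have t4a := tend_poly_geom (1-z) hr0 hr1 3
    have t4 : Tendsto (fun m : ℕ => (((m:ℝ)+2) * (1-z)^(m+3)) * (1/(((m:ℝ)+3)*z)))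
        atTop (nhds 0) := by
      have := t4a.mul t3
      simpa using this
    have h : Tendsto (fun m : ℕ =>
        -(2*(((m:ℝ)+2) * (1-z)^(m+2))) - (3/2)*z*(((m:ℝ)+2)^2*(1-z)^(m+1))
          - 1/(((m:ℝ)+3)*z) - (((m:ℝ)+2) * (1-z)^(m+3)) * (1/(((m:ℝ)+3)*z)))
        atTop (nhds 0) := by
      have := (((t1.const_mul (2:ℝ)).neg.sub (t2.const_mul ((3/2)*z))).sub t3).sub t4
      simpa using this
    refine h.congr fun m => ?_
    rw [hGdef]
    simp only
    field_simp
  have htendQ : Tendsto (fun m : ℕ => ((m:ℝ)+2) * Q m) atTop (nhds 0) := by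
    have hub : ∀ m : ℕ, ((m:ℝ)+2) * Q m ≤ 8/(((m:ℝ)+4)*z^2) := by
      intro m
      have h1 : Q m ≤ 8/(((m:ℝ)+3)*((m:ℝ)+4)*z^2) := Qbound z hz0 (le_of_lt hz1) m
      have h2 : ((m:ℝ)+2) * Q m ≤ ((m:ℝ)+2) * (8/(((m:ℝ)+3)*((m:ℝ)+4)*z^2)) :=
        mul_le_mul_of_nonneg_left h1 (by positivity)
      refine h2.trans ?_
      rw [mul_div_assoc', div_le_div_iff₀ (by positivity) (by positivity)]
      nlinarith [pow_pos hz0 2, mul_pos (by positivity : (0:ℝ) < (m:ℝ)+4) (pow_pos hz0 2),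
        mul_pos (mul_pos (by positivity : (0:ℝ) < (m:ℝ)+3)
          (by positivity : (0:ℝ) < (m:ℝ)+4)) (pow_pos hz0 2)]
    have hlb : ∀ m : ℕ, 0 ≤ ((m:ℝ)+2) * Q m := by
      intro m
      exact mul_nonneg (by positivity) (Qnonneg z (le_of_lt hz0) (le_of_lt hz1) m)
    have htub : Tendsto (fun m : ℕ => 8/(((m:ℝ)+4)*z^2)) atTop (nhds 0) := by
      have h : Tendsto (fun m : ℕ => (m:ℝ)+4) atTop atTop :=
        tendsto_atTop_add_const_right _ 4 tendsto_natCast_atTop_atTop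
      have h2 : Tendsto (fun m : ℕ => ((m:ℝ)+4)⁻¹) atTop (nhds 0) :=
        tendsto_inv_atTop_zero.comp h
      have h3 := h2.const_mul (8/z^2)
      simp only [mul_zero] at h3
      refine h3.congr fun m => ?_
      have : z^2 ≠ 0 := by positivity
      field_simp
    exact squeeze_zero hlb hub htub
  have htendm : Tendsto (fun m : ℕ => ((m:ℝ)+2) * f (m+2)) atTop (nhds 0) := by
    have := htendG.add htendQ
    rw [add_zero] at this
    exact this.congr fun m => (key m).symm
  have htendN : Tendsto (fun N : ℕ => (N:ℝ) * f N) atTop (nhds 0) := by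
    have hsub : Tendsto (fun N : ℕ => N - 2) atTop atTop := tendsto_sub_atTop_nat 2
    have hcomp := htendm.comp hsub
    refine hcomp.congr' ?_
    filter_upwards [eventually_ge_atTop 2] with N hN
    have h2 : (N - 2) + 2 = N := by omega
    have h3 : ((N - 2 : ℕ):ℝ) + 2 = (N:ℝ) := by
      have : ((N - 2 : ℕ):ℝ) = (N:ℝ) - 2 := by
        push_cast [hN]; ring
      rw [this]; ring
    show (((N - 2 : ℕ):ℝ) + 2) * f ((N - 2) + 2) = (N:ℝ) * f N
    rw [h2, h3]
  rw [Asymptotics.isLittleO_iff]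
  intro c hc
  have h1 := (NormedAddCommGroup.tendsto_nhds_zero.mp htendN) c hc
  filter_upwards [h1, eventually_ge_atTop 1] with N hN hN1
  have hNpos : (0:ℝ) < (N:ℝ) := by
    have : (1:ℕ) ≤ N := hN1
    exact_mod_cast Nat.lt_of_lt_of_le Nat.zero_lt_one this
  have hnorm : ‖(N:ℝ) * f N‖ = (N:ℝ) * ‖f N‖ := by
    rw [norm_mul, Real.norm_eq_abs (N:ℝ), abs_of_pos hNpos]
  rw [hnorm] at hN
  have h2 : ‖f N‖ ≤ c / (N:ℝ) := by
    rw [le_div_iff₀ hNpos]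
    nlinarith [norm_nonneg (f N)]
  refine h2.trans (le_of_eq ?_)
  rw [Real.norm_eq_abs, abs_of_pos (by positivity : (0:ℝ) < 1/(N:ℝ))]
  ring
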